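/- arXiv:0704.0215 — 6 statements merged into one kernel-verified Lean document; each statement's English description precedes it below -/
import Mathlib

section
/- Let a₁ ∈ ℝ^{n₁} and a₂ ∈ ℝ^{n₂} be irreducible vectors whose means satisfy mean(a₁) > mean(a₂). Then the concatenated vector (a₁, a₂) ∈ ℝ^{n₁+n₂} is irreducible. -/
open Finset

/-- arithmetic mean of the first `m` coordinates. -/
noncomputable def vecMean (m : ℕ) (a : ℕ → ℝ) : ℝ :=
  (∑ i ∈ Finset.range m, a i) / (m : ℝ)

/-- a vector of length `m` (0-indexed) is irreducible if every prefix mean strictly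
exceeds the corresponding suffix mean. -/
def IrreducibleVec (m : ℕ) (a : ℕ → ℝ) : Prop :=
  ∀ k, 0 < k → k < m →
    (∑ i ∈ Finset.range k, a i) / (k : ℝ) >
      (∑ i ∈ Finset.Ico k m, a i) / ((m : ℝ) - (k : ℝ))

lemma mediant_lt (x y p q : ℝ) (hp : 0 < p) (hq : 0 < q) (h : y / q < x / p) :
    (x + y) / (p + q) < x / p ∧ y / q < (x + y) / (p + q) := by
  have hpq : 0 < p + q := by linarith
  have h' : y * p < x * q := by
    rw [div_lt_div_iff₀ hq hp] at h; linarith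
  constructor
  · rw [div_lt_div_iff₀ hpq hp]; nlinarith
  · rw [div_lt_div_iff₀ hq hpq]; nlinarith

lemma avg_lt (x y p q t : ℝ) (hp : 0 < p) (hq : 0 < q)
    (hx : t < x / p) (hy : t < y / q) : t < (x + y) / (p + q) := by
  rw [lt_div_iff₀ hp] at hx
  rw [lt_div_iff₀ hq] at hy
  rw [lt_div_iff₀ (by linarith : (0:ℝ) < p + q)]
  nlinarith

lemma avg_gt (x y p q t : ℝ) (hp : 0 < p) (hq : 0 < q)
    (hx : x / p < t) (hy : y / q < t) : (x + y) / (p + q) < t := by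
  rw [div_lt_iff₀ hp] at hx
  rw [div_lt_iff₀ hq] at hy
  rw [div_lt_iff₀ (by linarith : (0:ℝ) < p + q)]
  nlinarith

theorem stmt1 (n₁ n₂ : ℕ) (h₁ : 0 < n₁) (h₂ : 0 < n₂) (a₁ a₂ : ℕ → ℝ)
    (hi₁ : IrreducibleVec n₁ a₁) (hi₂ : IrreducibleVec n₂ a₂)
    (hmean : vecMean n₁ a₁ > vecMean n₂ a₂) :
    IrreducibleVec (n₁ + n₂) (fun i => if i < n₁ then a₁ i else a₂ (i - n₁)) := by
  intro k hk hkm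
  set b : ℕ → ℝ := fun i => if i < n₁ then a₁ i else a₂ (i - n₁) with hb
  have hn1 : (0:ℝ) < n₁ := by exact_mod_cast h₁
  have hn2 : (0:ℝ) < n₂ := by exact_mod_cast h₂
  have hbL : ∀ i, i < n₁ → b i = a₁ i := fun i hi => by simp [hb, hi]
  have hbR : ∀ i, b (n₁ + i) = a₂ i := fun i => by
    simp [hb, Nat.add_sub_cancel_left]
  have hmean' : (∑ i ∈ Finset.range n₁, a₁ i) / (n₁:ℝ)
      > (∑ i ∈ Finset.range n₂, a₂ i) / (n₂:ℝ) := hmean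
  have hS2 : ∑ i ∈ Finset.Ico n₁ (n₁ + n₂), b i = ∑ i ∈ Finset.range n₂, a₂ i := by
    rw [Finset.sum_Ico_eq_sum_range]
    simp only [Nat.add_sub_cancel_left]
    exact Finset.sum_congr rfl fun i _ => hbR i
  rcases lt_trichotomy k n₁ with hlt | heq | hgt
  · -- k < n₁
    have hkn : (k:ℝ) < n₁ := by exact_mod_cast hlt
    have hk' : (0:ℝ) < k := by exact_mod_cast hk
    have hpre : ∑ i ∈ Finset.range k, b i = ∑ i ∈ Finset.range k, a₁ i :=
      Finset.sum_congr rfl fun i hi => hbL i (lt_of_lt_of_le (Finset.mem_range.mp hi) hlt.le)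
    have hsuf : ∑ i ∈ Finset.Ico k (n₁ + n₂), b i
        = (∑ i ∈ Finset.Ico k n₁, a₁ i) + ∑ i ∈ Finset.range n₂, a₂ i := by
      rw [← Finset.sum_Ico_consecutive _ hlt.le (Nat.le_add_right n₁ n₂), hS2]
      congr 1
      exact Finset.sum_congr rfl fun i hi => hbL i (Finset.mem_Ico.mp hi).2
    rw [hpre, hsuf]
    have hirr := hi₁ k hk hlt
    have hmed := (mediant_lt _ _ _ _ hk' (by linarith) hirr).1
    rw [Finset.sum_range_add_sum_Ico a₁ hlt.le] at hmed
    have h2 : (∑ i ∈ Finset.range n₂, a₂ i) / (n₂:ℝ)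
        < (∑ i ∈ Finset.range k, a₁ i) / (k:ℝ) := by
      calc _ < (∑ i ∈ Finset.range n₁, a₁ i) / (n₁:ℝ) := hmean'
        _ < _ := by
          have hcast : (k:ℝ) + ((n₁:ℝ) - k) = n₁ := by ring
          rwa [hcast] at hmed
    have := avg_gt _ _ _ _ _ (by linarith : (0:ℝ) < (n₁:ℝ) - k) hn2 hirr h2
    have hcast : ((n₁:ℝ) - k) + n₂ = ((n₁ + n₂ : ℕ) : ℝ) - k := by push_cast; ring
    rw [hcast] at this
    exact this
  · -- k = n₁
    subst heq
    have hpre : ∑ i ∈ Finset.range k, b i = ∑ i ∈ Finset.range k, a₁ i :=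
      Finset.sum_congr rfl fun i hi => hbL i (Finset.mem_range.mp hi)
    rw [hpre, hS2]
    have hcast : ((k + n₂ : ℕ) : ℝ) - k = n₂ := by push_cast; ring
    rw [hcast]
    exact hmean'
  · -- k > n₁
    have hj : k - n₁ < n₂ := by omega
    have hj0 : 0 < k - n₁ := by omega
    set j := k - n₁ with hjd
    have hkj : k = n₁ + j := by omega
    have hjr : (0:ℝ) < j := by exact_mod_cast hj0
    have hjn : (j:ℝ) < n₂ := by exact_mod_cast hj
    have hpre : ∑ i ∈ Finset.range k, b i
        = (∑ i ∈ Finset.range n₁, a₁ i) + ∑ i ∈ Finset.range j, a₂ i := by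
      rw [← Finset.sum_range_add_sum_Ico b (by omega : n₁ ≤ k)]
      congr 1
      · exact Finset.sum_congr rfl fun i hi => hbL i (Finset.mem_range.mp hi)
      · rw [Finset.sum_Ico_eq_sum_range]
        have hkn : k - n₁ = j := rfl
        rw [hkn]
        exact Finset.sum_congr rfl fun i _ => hbR i
    have hsuf : ∑ i ∈ Finset.Ico k (n₁ + n₂), b i = ∑ i ∈ Finset.Ico j n₂, a₂ i := by
      rw [Finset.sum_Ico_eq_sum_range, Finset.sum_Ico_eq_sum_range]
      have : n₁ + n₂ - k = n₂ - j := by omega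
      rw [this]
      refine Finset.sum_congr rfl fun i _ => ?_
      have : k + i = n₁ + (j + i) := by omega
      rw [this, hbR]
    rw [hpre, hsuf]
    have hirr := hi₂ j hj0 hj
    have hmed := (mediant_lt _ _ _ _ hjr (by linarith) hirr).2
    rw [Finset.sum_range_add_sum_Ico a₂ hj.le] at hmed
    have hcast2 : (j:ℝ) + ((n₂:ℝ) - j) = n₂ := by ring
    rw [hcast2] at hmed
    have h1 : (∑ i ∈ Finset.Ico j n₂, a₂ i) / ((n₂:ℝ) - j)
        < (∑ i ∈ Finset.range n₁, a₁ i) / (n₁:ℝ) := lt_trans hmed hmean'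
    have := avg_lt _ _ _ _ _ hn1 hjr h1 hirr
    have hcast : ((n₁ + n₂ : ℕ) : ℝ) - k = (n₂:ℝ) - j := by
      have : (k:ℝ) = n₁ + j := by exact_mod_cast hkj
      push_cast [this]; ring
    have hcast' : (n₁:ℝ) + j = k := by
      have : (k:ℝ) = n₁ + j := by exact_mod_cast hkj
      linarith
    rw [hcast, ← hcast']
    exact this
end

section
/- For each vector a ∈ ℝ^n, there exists a partition of a into consecutive blocks (a_{m_0+1},...,a_{m_1}), (a_{m_1+1},...,a_{m_2}), ..., (a_{m_{q-1}+1},...,a_{m_q}) with 0 = m_0 < m_1 < ... < m_q = n, such that each block is irreducible and the block means f^1 ≤ f^2 ≤ ... ≤ f^q are nondecreasing. -/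
open Finset

/-- mean of the block `a_i, ..., a_{j-1}` (0-indexed, half-open). -/
noncomputable def blockMean (a : ℕ → ℝ) (i j : ℕ) : ℝ :=
  (∑ l ∈ Finset.Ico i j, a l) / ((j : ℝ) - (i : ℝ))

/-- a partition of `(a_0, ..., a_{n-1})` into `q` consecutive blocks with endpoints
`0 = m 0 < m 1 < ... < m q = n` is stable if each block is irreducible and the block
means are nondecreasing. -/
def IsStablePartition (n q : ℕ) (a : ℕ → ℝ) (m : ℕ → ℕ) : Prop :=
  0 < q ∧ m 0 = 0 ∧ m q = n ∧ (∀ i < q, m i < m (i + 1)) ∧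
  (∀ i < q, IrreducibleVec (m (i + 1) - m i) (fun j => a (m i + j))) ∧
  (∀ i, i + 1 < q → blockMean a (m i) (m (i + 1)) ≤ blockMean a (m (i + 1)) (m (i + 2)))

/-- prefix/suffix mean comparison reduces to prefix mean vs total mean. -/
lemma mean_iff (A B : ℝ) (k m : ℕ) (hk : 0 < k) (hkm : k < m) :
    B / ((m : ℝ) - k) < A / k ↔ (A + B) / m < A / k := by
  have hk' : (0 : ℝ) < k := by exact_mod_cast hk
  have hm' : (0 : ℝ) < m := by exact_mod_cast hk.trans hkm
  have hmk : (0 : ℝ) < (m : ℝ) - k := by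
    have : (k : ℝ) < m := by exact_mod_cast hkm
    linarith
  rw [div_lt_div_iff₀ hmk hk', div_lt_div_iff₀ hm' hk']
  constructor <;> intro h <;> nlinarith

lemma blockMean_shift (a : ℕ → ℝ) (c i j : ℕ) :
    blockMean (fun t => a (c + t)) i j = blockMean a (c + i) (c + j) := by
  unfold blockMean
  congr 1
  · rw [Finset.sum_Ico_eq_sum_range, Finset.sum_Ico_eq_sum_range]
    have : c + j - (c + i) = j - i := by omega
    rw [this]
    exact Finset.sum_congr rfl (fun t _ => by rw [add_assoc])
  · push_cast; ring

lemma mono_of_strict (m : ℕ → ℕ) (q : ℕ) (h : ∀ i < q, m i < m (i + 1)) :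
    ∀ i j, i ≤ j → j ≤ q → m i ≤ m j := by
  have key : ∀ d i, i + d ≤ q → m i ≤ m (i + d) := by
    intro d
    induction d with
    | zero => intro i _; simp
    | succ d ih =>
      intro i hi
      have h1 : m i ≤ m (i + d) := ih i (by omega)
      have h2 : m (i + d) < m (i + d + 1) := h (i + d) (by omega)
      calc m i ≤ m (i + d) := h1
        _ ≤ m (i + (d + 1)) := by rw [show i + (d + 1) = i + d + 1 by ring]; omega
  intro i j hij hjq
  have := key (j - i) i (by omega)
  rwa [show i + (j - i) = j by omega] at this

lemma exists_stable : ∀ n : ℕ, 0 < n → ∀ a : ℕ → ℝ,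
    ∃ q : ℕ, ∃ m : ℕ → ℕ, IsStablePartition n q a m := by
  intro n
  induction n using Nat.strong_induction_on with
  | _ n ih =>
  intro hn a
  set S : ℕ → ℝ := fun k => ∑ i ∈ Finset.range k, a i with hS
  set g : ℕ → ℝ := fun k => S k / k with hg
  have hP : ∃ k, 1 ≤ k ∧ k ≤ n ∧ ∀ j, 1 ≤ j → j ≤ n → g k ≤ g j := by
    obtain ⟨k0, hk0mem, hk0min⟩ := Finset.exists_min_image (Finset.Icc 1 n) g
      ⟨n, Finset.mem_Icc.mpr ⟨hn, le_refl n⟩⟩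
    simp only [Finset.mem_Icc] at hk0mem
    exact ⟨k0, hk0mem.1, hk0mem.2, fun j h1 h2 => hk0min j (Finset.mem_Icc.mpr ⟨h1, h2⟩)⟩
  obtain ⟨hm1ge, hm1le, hm1min⟩ := Nat.find_spec hP
  set m1 := Nat.find hP with hm1def
  have hstrict : ∀ j, 1 ≤ j → j < m1 → g m1 < g j := by
    intro j hj1 hjm
    by_contra hle
    push_neg at hle
    have hPj : 1 ≤ j ∧ j ≤ n ∧ ∀ j', 1 ≤ j' → j' ≤ n → g j ≤ g j' :=
      ⟨hj1, by omega, fun j' h1 h2 => hle.trans (hm1min j' h1 h2)⟩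
    have hfind := Nat.find_le (h := hP) hPj
    omega
  -- the first block is irreducible
  have hirr1 : IrreducibleVec m1 a := by
    intro k hk hkm
    have hsplit : (∑ i ∈ Finset.range k, a i) + (∑ i ∈ Finset.Ico k m1, a i)
        = S m1 := Finset.sum_range_add_sum_Ico a (le_of_lt hkm)
    rw [gt_iff_lt, mean_iff _ _ k m1 hk hkm, hsplit]
    exact hstrict k hk hkm
  have hirr1' : ∀ c, c = m1 → IrreducibleVec (m1 - 0) (fun j => a (0 + j)) := by
    intro c _
    have : (fun j => a (0 + j)) = a := by funext j; rw [Nat.zero_add]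
    rw [Nat.sub_zero, this]
    exact hirr1
  by_cases hcase : m1 = n
  · -- single block
    set M : ℕ → ℕ := fun i => if i = 0 then 0 else n with hM
    have hM0 : M 0 = 0 := rfl
    have hM1 : M 1 = n := rfl
    refine ⟨1, M, one_pos, hM0, hM1, ?_, ?_, ?_⟩
    · intro i hi
      interval_cases i
      rw [hM0, hM1]; exact hn
    · intro i hi
      interval_cases i
      rw [hM0, hM1, ← hcase]
      exact hirr1' m1 rfl
    · intro i hi; omega
  · -- recurse on the tail
    have hm1lt : m1 < n := lt_of_le_of_ne hm1le hcase
    obtain ⟨q', m', hq', hm'0, hm'q, hm'inc, hm'irr, hm'mean⟩ :=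
      ih (n - m1) (by omega) (by omega) (fun t => a (m1 + t))
    have hm'mono : ∀ i j, i ≤ j → j ≤ q' → m' i ≤ m' j := mono_of_strict m' q' hm'inc
    set M : ℕ → ℕ := fun i => if i = 0 then 0 else m1 + m' (i - 1) with hM
    have hM0 : M 0 = 0 := rfl
    have hMs : ∀ j, M (j + 1) = m1 + m' j := fun j => rfl
    refine ⟨q' + 1, M, by omega, hM0, ?_, ?_, ?_, ?_⟩
    · rw [hMs q', hm'q]; omega
    · intro i hi
      rcases i with _ | j
      · rw [hM0, hMs 0, hm'0]; omega
      · rw [hMs j, hMs (j + 1)]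
        have := hm'inc j (by omega)
        omega
    · intro i hi
      rcases i with _ | j
      · rw [hM0, hMs 0, hm'0, Nat.add_zero]
        exact hirr1' m1 rfl
      · rw [hMs j, hMs (j + 1)]
        have e1 : m1 + m' (j + 1) - (m1 + m' j) = m' (j + 1) - m' j := by omega
        have e2 : (fun t => a (m1 + m' j + t)) = (fun t => a (m1 + (m' j + t))) := by
          funext t; rw [add_assoc]
        rw [e1, e2]
        exact hm'irr j (by omega)
    · intro i hi
      rcases i with _ | j
      · -- first vs second block
        rw [hM0, hMs 0, hMs 1, hm'0, Nat.add_zero]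
        set m2 := m1 + m' 1 with hm2
        have hm'1pos : 0 < m' 1 := by
          have h := hm'inc 0 hq'
          rw [Nat.zero_add] at h
          omega
        have hm'1le : m' 1 ≤ n - m1 := by
          have h := hm'mono 1 q' hq' (le_refl q')
          rw [hm'q] at h
          exact h
        have hm2gt : m1 < m2 := by omega
        have hm2le : m2 ≤ n := by omega
        have hb1 : blockMean a 0 m1 = S m1 / m1 := by
          unfold blockMean
          rw [← Finset.range_eq_Ico]
          norm_num
          rfl
        have hb2 : blockMean a m1 m2 = (S m2 - S m1) / ((m2 : ℝ) - m1) := by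
          unfold blockMean
          rw [Finset.sum_Ico_eq_sub a (le_of_lt hm2gt)]
        rw [hb1, hb2]
        have hgle : S m1 / m1 ≤ S m2 / m2 := hm1min m2 (by omega) hm2le
        have hp : (0 : ℝ) < (m1 : ℝ) := by exact_mod_cast hm1ge
        have hr : (0 : ℝ) < (m2 : ℝ) := by
          have : 0 < m2 := by omega
          exact_mod_cast this
        have hrp : (0 : ℝ) < (m2 : ℝ) - m1 := by
          have : (m1 : ℝ) < m2 := by exact_mod_cast hm2gt
          linarith
        rw [div_le_div_iff₀ hp hr] at hgle
        rw [div_le_div_iff₀ hp hrp]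
        nlinarith
      · -- two tail blocks
        rw [hMs j, hMs (j + 1), hMs (j + 2)]
        have key := hm'mean j (by omega)
        rw [blockMean_shift a m1 (m' j) (m' (j + 1)),
            blockMean_shift a m1 (m' (j + 1)) (m' (j + 2))] at key
        exact key

theorem stmt2 (n : ℕ) (hn : 0 < n) (a : ℕ → ℝ) :
    ∃ q : ℕ, ∃ m : ℕ → ℕ, IsStablePartition n q a m :=
  exists_stable n hn a
end

section
/- For each vector a ∈ ℝ^n, the stable partition is unique: if 0 = m_0 < m_1 < ... < m_{q_1} = n and 0 = m'_0 < m'_1 < ... < m'_{q_2} = n are both stable partitions of a (each block irreducible, block means nondecreasing), then q_1 = q_2 and m_i = m'_i for all i. -/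
open Finset

noncomputable def SP.S (a : ℕ → ℝ) (k : ℕ) : ℝ := ∑ i ∈ Finset.range k, a i

def SP.Extremal (a : ℕ → ℝ) (n k : ℕ) : Prop :=
  ∀ i j : ℕ, i < k → k < j → j ≤ n →
    (SP.S a k - SP.S a i) * ((j:ℝ) - (k:ℝ)) ≤ (SP.S a j - SP.S a k) * ((k:ℝ) - (i:ℝ))

namespace SP

lemma sIco (a : ℕ → ℝ) {i j : ℕ} (h : i ≤ j) :
    ∑ l ∈ Finset.Ico i j, a l = S a j - S a i :=
  Finset.sum_Ico_eq_sub a h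

lemma blockMean_eq (a : ℕ → ℝ) {i j : ℕ} (h : i < j) :
    blockMean a i j = (S a j - S a i) / ((j:ℝ) - (i:ℝ)) := by
  rw [blockMean, sIco a h.le]

lemma cast_sub_pos {i j : ℕ} (h : i < j) : (0:ℝ) < (j:ℝ) - (i:ℝ) := by
  have : (i:ℝ) < (j:ℝ) := by exact_mod_cast h
  linarith

lemma block_sum (a : ℕ → ℝ) {i j : ℕ} (h : i < j) :
    S a j - S a i = blockMean a i j * ((j:ℝ) - (i:ℝ)) := by
  rw [blockMean_eq a h, div_mul_cancel₀]
  exact ne_of_gt (cast_sub_pos h)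

lemma irred_cross {a : ℕ → ℝ} {u v : ℕ}
    (h : IrreducibleVec (v - u) (fun j => a (u + j))) :
    ∀ k, u < k → k < v →
      (S a v - S a k) * ((k:ℝ) - (u:ℝ)) < (S a k - S a u) * ((v:ℝ) - (k:ℝ)) := by
  intro k hk1 hk2
  have h1 := h (k - u) (by omega) (by omega)
  simp only at h1
  have e1 : (∑ i ∈ Finset.range (k - u), a (u + i)) = S a k - S a u := by
    rw [← Finset.sum_Ico_eq_sum_range]
    exact sIco a (by omega)
  have e2 : (∑ i ∈ Finset.Ico (k - u) (v - u), a (u + i)) = S a v - S a k := by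
    rw [Finset.sum_Ico_eq_sum_range]
    rw [show (v - u) - (k - u) = v - k by omega]
    rw [show (∑ i ∈ Finset.range (v - k), a (u + (k - u + i)))
        = ∑ i ∈ Finset.range (v - k), a (k + i) from
      Finset.sum_congr rfl (fun i _ => by congr 1; omega)]
    rw [← Finset.sum_Ico_eq_sum_range]
    exact sIco a (by omega)
  rw [e1, e2] at h1
  have c1 : ((k - u : ℕ) : ℝ) = (k:ℝ) - (u:ℝ) := by
    push_cast [Nat.cast_sub hk1.le]; ring
  have c2 : ((v - u : ℕ) : ℝ) = (v:ℝ) - (u:ℝ) := by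
    push_cast [Nat.cast_sub (by omega : u ≤ v)]; ring
  have d1pos : (0:ℝ) < ((k - u : ℕ) : ℝ) := by
    rw [c1]; exact cast_sub_pos hk1
  have d2pos : (0:ℝ) < ((v - u : ℕ):ℝ) - ((k - u:ℕ):ℝ) := by
    rw [c1, c2]
    have := cast_sub_pos hk2
    linarith
  rw [gt_iff_lt, div_lt_div_iff₀ d2pos d1pos] at h1
  rw [c1, c2] at h1
  nlinarith [h1]

variable {n q : ℕ} {a : ℕ → ℝ} {m : ℕ → ℕ}

lemma m_mono (h : IsStablePartition n q a m) :
    ∀ s t, s ≤ t → t ≤ q → m s ≤ m t := by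
  intro s t
  induction t with
  | zero =>
    intro h1 _
    have : s = 0 := by omega
    subst this; exact le_rfl
  | succ t ih =>
    intro h1 h2
    rcases eq_or_lt_of_le h1 with h' | h'
    · subst h'; exact le_rfl
    · have i1 := ih (by omega) (by omega)
      have i2 := h.2.2.2.1 t (by omega)
      omega

lemma m_strict (h : IsStablePartition n q a m) :
    ∀ s t, s < t → t ≤ q → m s < m t := by
  intro s t hst htq
  have := m_mono h (s+1) t (by omega) htq
  have := h.2.2.2.1 s (by omega)
  omega

lemma m_le_n (h : IsStablePartition n q a m) : ∀ t, t ≤ q → m t ≤ n := by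
  intro t ht
  have := m_mono h t q ht le_rfl
  rw [h.2.2.1] at this
  exact this

lemma m_reflect (h : IsStablePartition n q a m) :
    ∀ s t, s ≤ q → t ≤ q → m s < m t → s < t := by
  intro s t hs ht hm
  by_contra hc
  push_neg at hc
  have := m_mono h t s hc hs
  omega

lemma locate (h : IsStablePartition n q a m) :
    ∀ k, k < n → ∃ s, s < q ∧ m s ≤ k ∧ k < m (s+1) := by
  have key : ∀ t, t ≤ q → ∀ k, k < m t → ∃ s, s < q ∧ m s ≤ k ∧ k < m (s+1) := by
    intro t
    induction t with
    | zero => intro _ k hk; rw [h.2.1] at hk; omega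
    | succ t ih =>
      intro htq k hk
      by_cases hc : m t ≤ k
      · exact ⟨t, by omega, hc, hk⟩
      · exact ih (by omega) k (by omega)
  intro k hk
  exact key q le_rfl k (by rw [h.2.2.1]; exact hk)

lemma mean_mono (h : IsStablePartition n q a m) :
    ∀ t, t + 1 ≤ q → ∀ s, s ≤ t →
      blockMean a (m s) (m (s+1)) ≤ blockMean a (m t) (m (t+1)) := by
  intro t
  induction t with
  | zero =>
    intro _ s hs
    have : s = 0 := by omega
    subst this; exact le_rfl
  | succ t ih =>
    intro hq' s hs
    rcases eq_or_lt_of_le hs with h' | h'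
    · subst h'; exact le_rfl
    · have i1 := ih (by omega) s (by omega)
      have i2 := h.2.2.2.2.2 t (by omega)
      linarith

lemma tele_upper (h : IsStablePartition n q a m) (c : ℝ) :
    ∀ t, t ≤ q → ∀ s, s ≤ t →
      (∀ r, s ≤ r → r < t → blockMean a (m r) (m (r+1)) ≤ c) →
      S a (m t) - S a (m s) ≤ c * ((m t : ℝ) - (m s : ℝ)) := by
  intro t
  induction t with
  | zero =>
    intro _ s hs _
    have : s = 0 := by omega
    subst this
    exact le_of_eq (by ring)
  | succ t ih =>
    intro htq s hs hb
    rcases eq_or_lt_of_le hs with h' | h'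
    · subst h'; exact le_of_eq (by ring)
    · have hs' : s ≤ t := by omega
      have i1 := ih (by omega) s hs' (fun r h1 h2 => hb r h1 (by omega))
      have hlt : m t < m (t+1) := h.2.2.2.1 t (by omega)
      have b1 := block_sum a hlt
      have b2 : blockMean a (m t) (m (t+1)) ≤ c := hb t hs' (by omega)
      have lpos := cast_sub_pos hlt
      have := mul_le_mul_of_nonneg_right b2 lpos.le
      linarith

lemma tele_lower (h : IsStablePartition n q a m) (c : ℝ) :
    ∀ t, t ≤ q → ∀ s, s ≤ t →
      (∀ r, s ≤ r → r < t → c ≤ blockMean a (m r) (m (r+1))) →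
      c * ((m t : ℝ) - (m s : ℝ)) ≤ S a (m t) - S a (m s) := by
  intro t
  induction t with
  | zero =>
    intro _ s hs _
    have : s = 0 := by omega
    subst this
    exact le_of_eq (by ring)
  | succ t ih =>
    intro htq s hs hb
    rcases eq_or_lt_of_le hs with h' | h'
    · subst h'; exact le_of_eq (by ring)
    · have hs' : s ≤ t := by omega
      have i1 := ih (by omega) s hs' (fun r h1 h2 => hb r h1 (by omega))
      have hlt : m t < m (t+1) := h.2.2.2.1 t (by omega)
      have b1 := block_sum a hlt
      have b2 : c ≤ blockMean a (m t) (m (t+1)) := hb t hs' (by omega)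
      have lpos := cast_sub_pos hlt
      have := mul_le_mul_of_nonneg_right b2 lpos.le
      linarith

lemma above_chord (h : IsStablePartition n q a m) :
    ∀ s, s < q → ∀ k, m s ≤ k → k ≤ m (s+1) →
      blockMean a (m s) (m (s+1)) * ((k:ℝ) - (m s:ℝ)) ≤ S a k - S a (m s) := by
  intro s hs k hk1 hk2
  have hlt : m s < m (s+1) := h.2.2.2.1 s hs
  rcases eq_or_lt_of_le hk1 with h' | h1
  · rw [← h']; exact le_of_eq (by ring)
  rcases eq_or_lt_of_le hk2 with h'' | h2
  · rw [h'']
    exact le_of_eq (block_sum a hlt).symm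
  · have hc := irred_cross (h.2.2.2.2.1 s hs) k h1 h2
    have htot : S a (m (s+1)) - S a (m s)
        = blockMean a (m s) (m (s+1)) * ((m (s+1):ℝ) - (m s:ℝ)) := block_sum a hlt
    have hp := cast_sub_pos h1
    have hr := cast_sub_pos h2
    have hD := cast_sub_pos hlt
    have key : (S a k - S a (m s) - blockMean a (m s) (m (s+1)) * ((k:ℝ) - (m s:ℝ)))
          * ((m (s+1):ℝ) - (m s:ℝ))
        = (S a k - S a (m s)) * ((m (s+1):ℝ) - (k:ℝ))
          - (S a (m (s+1)) - S a k) * ((k:ℝ) - (m s:ℝ)) := by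
      calc (S a k - S a (m s) - blockMean a (m s) (m (s+1)) * ((k:ℝ) - (m s:ℝ)))
            * ((m (s+1):ℝ) - (m s:ℝ))
          = (S a k - S a (m s)) * ((m (s+1):ℝ) - (m s:ℝ))
            - (blockMean a (m s) (m (s+1)) * ((m (s+1):ℝ) - (m s:ℝ))) * ((k:ℝ) - (m s:ℝ)) := by
            ring
        _ = (S a k - S a (m s)) * ((m (s+1):ℝ) - (m s:ℝ))
            - (S a (m (s+1)) - S a (m s)) * ((k:ℝ) - (m s:ℝ)) := by rw [← htot]
        _ = (S a k - S a (m s)) * ((m (s+1):ℝ) - (k:ℝ))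
            - (S a (m (s+1)) - S a k) * ((k:ℝ) - (m s:ℝ)) := by ring
    have h3 : 0 < (S a k - S a (m s) - blockMean a (m s) (m (s+1)) * ((k:ℝ) - (m s:ℝ)))
          * ((m (s+1):ℝ) - (m s:ℝ)) := by
      rw [key]; linarith
    rcases mul_pos_iff.mp h3 with ⟨hx, _⟩ | ⟨_, hy⟩
    · linarith
    · linarith

lemma left_bound (h : IsStablePartition n q a m) :
    ∀ t, t < q → ∀ i, i < m (t+1) →
      S a (m (t+1)) - S a i ≤ blockMean a (m t) (m (t+1)) * ((m (t+1):ℝ) - (i:ℝ)) := by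
  intro t ht i hi
  have hin : i < n := lt_of_lt_of_le hi (m_le_n h (t+1) ht)
  obtain ⟨s, hs, h1, h2⟩ := locate h i hin
  have hst : s ≤ t := by
    by_contra hc
    push_neg at hc
    have := m_mono h (t+1) s (by omega) (by omega)
    omega
  have hA : S a (m (t+1)) - S a (m (s+1))
      ≤ blockMean a (m t) (m (t+1)) * ((m (t+1):ℝ) - (m (s+1):ℝ)) :=
    tele_upper h _ (t+1) (by omega) (s+1) (by omega)
      (fun r hr1 hr2 => mean_mono h t (by omega) r (by omega))
  have hAC := above_chord h s hs i h1 h2.le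
  have hBS := block_sum a (show m s < m (s+1) from h.2.2.2.1 s hs)
  have hB : S a (m (s+1)) - S a i ≤ blockMean a (m s) (m (s+1)) * ((m (s+1):ℝ) - (i:ℝ)) := by
    nlinarith [hAC, hBS]
  have hμ : blockMean a (m s) (m (s+1)) ≤ blockMean a (m t) (m (t+1)) :=
    mean_mono h t (by omega) s hst
  have h0 : (0:ℝ) ≤ (m (s+1):ℝ) - (i:ℝ) := le_of_lt (cast_sub_pos h2)
  have := mul_le_mul_of_nonneg_right hμ h0
  linarith

lemma right_bound (h : IsStablePartition n q a m) :
    ∀ t, t < q → ∀ j, m t < j → j ≤ n →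
      blockMean a (m t) (m (t+1)) * ((j:ℝ) - (m t:ℝ)) ≤ S a j - S a (m t) := by
  intro t ht j hj hjn
  have hn' : 0 < n := by
    have := m_le_n h t ht.le
    omega
  obtain ⟨s, hs, h1, h2⟩ := locate h (j-1) (by omega)
  have h1' : m s < j := by omega
  have h2' : j ≤ m (s+1) := by omega
  have hts : t ≤ s := by
    by_contra hc
    push_neg at hc
    have := m_mono h (s+1) t (by omega) (by omega)
    omega
  have hA : blockMean a (m t) (m (t+1)) * ((m s:ℝ) - (m t:ℝ)) ≤ S a (m s) - S a (m t) :=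
    tele_lower h _ s (by omega) t hts
      (fun r hr1 hr2 => mean_mono h r (by omega) t hr1)
  have hB : blockMean a (m s) (m (s+1)) * ((j:ℝ) - (m s:ℝ)) ≤ S a j - S a (m s) :=
    above_chord h s hs j h1'.le h2'
  have hμ : blockMean a (m t) (m (t+1)) ≤ blockMean a (m s) (m (s+1)) :=
    mean_mono h s hs t hts
  have h0 : (0:ℝ) ≤ (j:ℝ) - (m s:ℝ) := le_of_lt (cast_sub_pos h1')
  have := mul_le_mul_of_nonneg_right hμ h0
  linarith

lemma bp_extremal (h : IsStablePartition n q a m) :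
    ∀ t, 0 < t → t < q → Extremal a n (m t) := by
  intro t ht0 htq i j hi hj hjn
  have e1 : t - 1 + 1 = t := by omega
  have l : S a (m t) - S a i ≤ blockMean a (m (t-1)) (m t) * ((m t:ℝ) - (i:ℝ)) := by
    have := left_bound h (t-1) (by omega) i (by rwa [e1])
    rwa [e1] at this
  have r : blockMean a (m t) (m (t+1)) * ((j:ℝ) - (m t:ℝ)) ≤ S a j - S a (m t) :=
    right_bound h t htq j hj hjn
  have d : blockMean a (m (t-1)) (m t) ≤ blockMean a (m t) (m (t+1)) := by
    have := h.2.2.2.2.2 (t-1) (by omega)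
    rwa [e1, show t - 1 + 2 = t + 1 by omega] at this
  have hjk : (0:ℝ) < (j:ℝ) - (m t:ℝ) := cast_sub_pos hj
  have hki : (0:ℝ) < (m t:ℝ) - (i:ℝ) := cast_sub_pos hi
  have p1 := mul_le_mul_of_nonneg_right l hjk.le
  have p2 := mul_le_mul_of_nonneg_right d (mul_nonneg hki.le hjk.le)
  have p3 := mul_le_mul_of_nonneg_right r hki.le
  nlinarith [p1, p2, p3]

lemma extremal_bp (h : IsStablePartition n q a m) :
    ∀ k, 0 < k → k < n → Extremal a n k → ∃ t, t ≤ q ∧ m t = k := by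
  intro k hk0 hkn he
  obtain ⟨s, hs, h1, h2⟩ := locate h k hkn
  rcases eq_or_lt_of_le h1 with h' | h'
  · exact ⟨s, hs.le, h'⟩
  · exfalso
    have hc := irred_cross (h.2.2.2.2.1 s hs) k h' h2
    have := he (m s) (m (s+1)) h' h2 (m_le_n h (s+1) hs)
    linarith

lemma bset_iff (h : IsStablePartition n q a m) :
    ∀ k, (∃ t, t ≤ q ∧ m t = k) ↔ (k = 0 ∨ k = n ∨ (0 < k ∧ k < n ∧ Extremal a n k)) := by
  intro k
  constructor
  · rintro ⟨t, htq, rfl⟩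
    by_cases h0 : m t = 0
    · exact Or.inl h0
    by_cases hn' : m t = n
    · exact Or.inr (Or.inl hn')
    have hle := m_le_n h t htq
    have ht0 : 0 < t := by
      by_contra hc
      have : t = 0 := by omega
      rw [this, h.2.1] at h0
      exact h0 rfl
    have htq' : t < q := by
      rcases eq_or_lt_of_le htq with h'' | h''
      · rw [h''] at hn'; exact absurd h.2.2.1 hn'
      · exact h''
    exact Or.inr (Or.inr ⟨by omega, by omega, bp_extremal h t ht0 htq'⟩)
  · rintro (rfl | rfl | ⟨h1, h2, h3⟩)
    · exact ⟨0, Nat.zero_le _, h.2.1⟩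
    · exact ⟨q, le_rfl, h.2.2.1⟩
    · exact extremal_bp h k h1 h2 h3

end SP

theorem stmt3 (n : ℕ) (hn : 0 < n) (a : ℕ → ℝ) (q₁ q₂ : ℕ) (m₁ m₂ : ℕ → ℕ)
    (h₁ : IsStablePartition n q₁ a m₁) (h₂ : IsStablePartition n q₂ a m₂) :
    q₁ = q₂ ∧ ∀ i ≤ q₁, m₁ i = m₂ i := by
  have hb : ∀ k, (∃ t, t ≤ q₁ ∧ m₁ t = k) ↔ (∃ t, t ≤ q₂ ∧ m₂ t = k) := by
    intro k
    rw [SP.bset_iff h₁, SP.bset_iff h₂]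
  have key : ∀ i, i ≤ q₁ → i ≤ q₂ ∧ m₁ i = m₂ i := by
    intro i
    induction i with
    | zero => intro _; exact ⟨Nat.zero_le _, by rw [h₁.2.1, h₂.2.1]⟩
    | succ i ih =>
      intro hi
      obtain ⟨hiq2, heq⟩ := ih (by omega)
      have hlt1 : m₁ i < m₁ (i+1) := h₁.2.2.2.1 i (by omega)
      have hin : m₁ i < n := by
        have := SP.m_le_n h₁ (i+1) hi
        omega
      have hi2 : i < q₂ := by
        rcases eq_or_lt_of_le hiq2 with h' | h'
        · exfalso
          have hnn : m₂ i = n := by rw [h']; exact h₂.2.2.1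
          omega
        · exact h'
      have hlt2 : m₂ i < m₂ (i+1) := h₂.2.2.2.1 i hi2
      have le1 : m₁ (i+1) ≤ m₂ (i+1) := by
        obtain ⟨t, ht, hmt⟩ := (hb (m₂ (i+1))).mpr ⟨i+1, by omega, rfl⟩
        have hx : m₁ i < m₁ t := by rw [hmt]; omega
        have hit : i < t := SP.m_reflect h₁ i t (by omega) ht hx
        calc m₁ (i+1) ≤ m₁ t := SP.m_mono h₁ (i+1) t (by omega) ht
          _ = m₂ (i+1) := hmt
      have le2 : m₂ (i+1) ≤ m₁ (i+1) := by
        obtain ⟨t, ht, hmt⟩ := (hb (m₁ (i+1))).mp ⟨i+1, hi, rfl⟩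
        have hx : m₂ i < m₂ t := by rw [hmt]; omega
        have hit : i < t := SP.m_reflect h₂ i t (by omega) ht hx
        calc m₂ (i+1) ≤ m₂ t := SP.m_mono h₂ (i+1) t (by omega) ht
          _ = m₁ (i+1) := hmt
      exact ⟨by omega, le_antisymm le1 le2⟩
  have hq : q₁ = q₂ := by
    obtain ⟨hle, hm⟩ := key q₁ le_rfl
    rcases eq_or_lt_of_le hle with h' | h'
    · exact h'
    · exfalso
      have hs := SP.m_strict h₂ q₁ q₂ h' le_rfl
      rw [← hm, h₁.2.2.1, h₂.2.2.1] at hs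
      omega
  exact ⟨hq, fun i hi => (key i hi).2⟩
end

section
/- In a stable partition of a ∈ ℝ^n with block endpoints m_0 = 0 < m_1 < ... < m_q = n and block means f^1 ≤ ... ≤ f^q, for each block index i and each k ≥ 1 with m_{i-1} + k ≤ n, the mean of the entries a_{m_{i-1}+1}, ..., a_{m_{i-1}+k} is at least f^i (the mean of block i). -/
open Finset

lemma aux_prefix (M : ℕ) (b : ℕ → ℝ) (h : IrreducibleVec M b) (k : ℕ)
    (hk : 0 < k) (hkm : k ≤ M) :
    (∑ i ∈ Finset.range M, b i) * k ≤ (∑ i ∈ Finset.range k, b i) * M := by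
  rcases eq_or_lt_of_le hkm with rfl | hlt
  · exact le_of_eq (by ring)
  · have h1 := h k hk hlt
    have hMk : (0:ℝ) < (M:ℝ) - k := by
      have : (k:ℝ) < M := by exact_mod_cast hlt
      linarith
    have hkpos : (0:ℝ) < (k:ℝ) := by exact_mod_cast hk
    rw [gt_iff_lt, div_lt_div_iff₀ hMk hkpos] at h1
    have hsplit : (∑ i ∈ Finset.range M, b i)
        = (∑ i ∈ Finset.range k, b i) + ∑ i ∈ Finset.Ico k M, b i := by
      rw [Finset.range_eq_Ico, Finset.range_eq_Ico,
        Finset.sum_Ico_consecutive _ (Nat.zero_le k) (le_of_lt hlt)]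
    have hd : (∑ i ∈ Finset.range k, b i) * ((M:ℝ) - k)
        = (∑ i ∈ Finset.range k, b i) * M - (∑ i ∈ Finset.range k, b i) * k := by ring
    rw [hsplit]
    nlinarith [h1]

theorem stmt4 (n q : ℕ) (a : ℕ → ℝ) (m : ℕ → ℕ)
    (hsp : IsStablePartition n q a m) (i : ℕ) (hi : i < q) (k : ℕ) (hk : 1 ≤ k)
    (hkn : m i + k ≤ n) :
    blockMean a (m i) (m i + k) ≥ blockMean a (m i) (m (i + 1)) := by
  obtain ⟨hq, hm0, hmq, hmono, hirr, hf⟩ := hsp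
  -- monotonicity of m
  have m_mono : ∀ u v, u ≤ v → v ≤ q → m u ≤ m v := by
    intro u v huv hvq
    induction v with
    | zero =>
      have hu : u = 0 := Nat.le_zero.mp huv
      subst hu; exact le_refl _
    | succ w ih =>
      rcases Nat.lt_or_ge u (w+1) with h | h
      · have h1 := hmono w (by omega)
        have h2 := ih (by omega) (by omega)
        omega
      · have hu : u = w + 1 := by omega
        subst hu; exact le_refl _
  -- monotonicity of block means
  have f_mono : ∀ u v, u ≤ v → v < q →
      blockMean a (m u) (m (u+1)) ≤ blockMean a (m v) (m (v+1)) := by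
    intro u v huv hvq
    induction v with
    | zero =>
      have hu : u = 0 := Nat.le_zero.mp huv
      subst hu; exact le_refl _
    | succ w ih =>
      rcases Nat.lt_or_ge u (w+1) with h | h
      · exact le_trans (ih (by omega) (by omega)) (hf w (by omega))
      · have hu : u = w + 1 := by omega
        subst hu; exact le_refl _
  set f := blockMean a (m i) (m (i+1)) with hfdef
  -- prefix of a block j beats f
  have block_prefix : ∀ j, i ≤ j → j < q → ∀ s, m j < s → s ≤ m (j+1) →
      f * ((s:ℝ) - (m j : ℝ)) ≤ ∑ l ∈ Finset.Ico (m j) s, a l := by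
    intro j hij hjq s hs1 hs2
    have hirrj := hirr j hjq
    have hmj := hmono j hjq
    have hMpos : 0 < m (j+1) - m j := by omega
    have haux := aux_prefix (m (j+1) - m j) (fun t => a (m j + t)) hirrj (s - m j)
      (by omega) (by omega)
    have e1 : (∑ t ∈ Finset.range (m (j+1) - m j), a (m j + t))
        = ∑ l ∈ Finset.Ico (m j) (m (j+1)), a l := by
      rw [Finset.sum_Ico_eq_sum_range]
    have e2 : (∑ t ∈ Finset.range (s - m j), a (m j + t))
        = ∑ l ∈ Finset.Ico (m j) s, a l := by
      rw [Finset.sum_Ico_eq_sum_range]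
    rw [e1, e2] at haux
    -- f ≤ f_j
    have hfj : f ≤ blockMean a (m j) (m (j+1)) := f_mono i j hij hjq
    have hMr : (0:ℝ) < ((m (j+1) : ℝ) - (m j : ℝ)) := by
      have : (m j : ℝ) < m (j+1) := by exact_mod_cast hmj
      linarith
    have hcast1 : ((m (j+1) - m j : ℕ) : ℝ) = (m (j+1) : ℝ) - (m j : ℝ) := by
      push_cast [Nat.cast_sub (le_of_lt hmj)]; ring
    have hcast2 : ((s - m j : ℕ) : ℝ) = (s : ℝ) - (m j : ℝ) := by
      push_cast [Nat.cast_sub (le_of_lt hs1)]; ring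
    rw [hcast1, hcast2] at haux
    have hspos : (0:ℝ) < (s:ℝ) - (m j : ℝ) := by
      have : (m j : ℝ) < s := by exact_mod_cast hs1
      linarith
    have hbj : blockMean a (m j) (m (j+1)) * ((s:ℝ) - (m j : ℝ))
        ≤ ∑ l ∈ Finset.Ico (m j) s, a l := by
      rw [blockMean, div_mul_eq_mul_div, div_le_iff₀ hMr]
      calc (∑ l ∈ Finset.Ico (m j) (m (j+1)), a l) * ((s:ℝ) - (m j:ℝ))
          ≤ (∑ l ∈ Finset.Ico (m j) s, a l) * ((m (j+1):ℝ) - (m j:ℝ)) := haux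
        _ = _ := by ring
    calc f * ((s:ℝ) - (m j : ℝ)) ≤ blockMean a (m j) (m (j+1)) * ((s:ℝ) - (m j : ℝ)) :=
          mul_le_mul_of_nonneg_right hfj (le_of_lt hspos)
      _ ≤ _ := hbj
  -- main sum inequality
  have key : ∀ j, i ≤ j → j < q → ∀ s, m i < s → s ≤ m (j+1) →
      f * ((s:ℝ) - (m i : ℝ)) ≤ ∑ l ∈ Finset.Ico (m i) s, a l := by
    intro j hij
    induction j, hij using Nat.le_induction with
    | base => intro hiq s hs1 hs2; exact block_prefix i (le_refl _) hiq s hs1 hs2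
    | succ w hw ih =>
      intro hwq s hs1 hs2
      rcases le_or_gt s (m (w+1)) with h | h
      · exact ih (by omega) s hs1 h
      · have hmi : m i < m (w+1) := by
          have h1 := hmono i hi
          have h2 := m_mono (i+1) (w+1) (by omega) (by omega)
          omega
        have hsplit : (∑ l ∈ Finset.Ico (m i) s, a l)
            = (∑ l ∈ Finset.Ico (m i) (m (w+1)), a l) + ∑ l ∈ Finset.Ico (m (w+1)) s, a l := by
          rw [Finset.sum_Ico_consecutive _ (le_of_lt hmi) (le_of_lt h)]
        have h1 := ih (by omega) (m (w+1)) hmi (le_refl _)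
        have h2 := block_prefix (w+1) (by omega) hwq s h hs2
        rw [hsplit]
        have : f * ((s:ℝ) - (m i:ℝ))
            = f * ((m (w+1):ℝ) - (m i:ℝ)) + f * ((s:ℝ) - (m (w+1):ℝ)) := by ring
        rw [this]
        exact add_le_add h1 h2
  -- conclude
  have hkey' : f * ((k:ℝ)) ≤ ∑ l ∈ Finset.Ico (m i) (m i + k), a l := by
    have := key (q-1) (by omega) (by omega) (m i + k) (by omega) (by
      have : q - 1 + 1 = q := by omega
      rw [this, hmq]; exact hkn)
    have hc : ((m i + k : ℕ):ℝ) - (m i : ℝ) = (k:ℝ) := by push_cast; ring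
    rwa [hc] at this
  have hkpos : (0:ℝ) < (k:ℝ) := by exact_mod_cast hk
  rw [ge_iff_le, blockMean]
  have hc : ((m i + k : ℕ):ℝ) - (m i : ℝ) = (k:ℝ) := by push_cast; ring
  rw [hc, le_div_iff₀ hkpos]
  exact hkey'
end

section
/- Let A be the n×n real matrix with A_{i,i} = −1 and A_{i,i+1} = 1 for 1 ≤ i ≤ n−1, all other entries of the first n−1 rows zero, and last row all ones. Then A is invertible and the (k,l) entry of (A^{-1})^T A^{-1} equals (1/n)·k·(n−l) for k ≤ l ≤ n−1, is symmetric, and its (n,n) entry equals 1/n with all other entries in the last row and column equal to 0. -/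
open Matrix

/-- The matrix with rows `e_{i+1} - e_i` for `i = 1, ..., n-1` and last row all ones. -/
noncomputable def Amat (n : ℕ) : Matrix (Fin n) (Fin n) ℝ :=
  Matrix.of fun i j =>
    if (i : ℕ) = n - 1 then 1
    else if (j : ℕ) = (i : ℕ) then -1
    else if (j : ℕ) = (i : ℕ) + 1 then 1
    else 0

noncomputable def Bmat (n : ℕ) : Matrix (Fin n) (Fin n) ℝ :=
  Matrix.of fun i j =>
    if (j : ℕ) = n - 1 then 1 / n
    else (if (j : ℕ) < (i : ℕ) then 1 else 0) - ((n : ℝ) - 1 - (j : ℕ)) / n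

lemma Bmat_last (n : ℕ) (i j : Fin n) (hj : (j:ℕ) = n - 1) : Bmat n i j = 1 / n := by
  simp only [Bmat, Matrix.of_apply, if_pos hj]

lemma Bmat_ne (n : ℕ) (i j : Fin n) (hj : (j:ℕ) ≠ n - 1) :
    Bmat n i j = (if (j:ℕ) < (i:ℕ) then (1:ℝ) else 0) - ((n:ℝ) - 1 - (j:ℕ)) / n := by
  simp only [Bmat, Matrix.of_apply, if_neg hj]

lemma sum_ind_range (j n : ℕ) :
    ∑ k ∈ Finset.range n, (if j < k then (1:ℝ) else 0) = ((n - (j+1) : ℕ) : ℝ) := by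
  induction n with
  | zero => simp
  | succ m ih =>
    rw [Finset.sum_range_succ, ih]
    split_ifs with h
    · have h1 : m + 1 - (j+1) = (m - (j+1)) + 1 := by omega
      rw [h1]; push_cast; ring
    · have h1 : m + 1 - (j+1) = m - (j+1) := by omega
      rw [h1, add_zero]

lemma sum_ind (n j : ℕ) (hj : j < n) :
    ∑ k : Fin n, (if j < (k:ℕ) then (1:ℝ) else 0) = (n : ℝ) - (j+1) := by
  rw [Fin.sum_univ_eq_sum_range (fun k => if j < k then (1:ℝ) else 0), sum_ind_range]
  have h1 : j + 1 ≤ n := hj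
  push_cast [Nat.cast_sub h1]
  ring

lemma AB_eq_one (n : ℕ) (hn : 0 < n) : Amat n * Bmat n = 1 := by
  have hn' : (n : ℝ) ≠ 0 := Nat.cast_ne_zero.mpr hn.ne'
  ext i j
  rw [Matrix.mul_apply, Matrix.one_apply]
  by_cases hi : (i : ℕ) = n - 1
  · have hrow : ∀ k : Fin n, Amat n i k = 1 := by
      intro k; simp [Amat, hi]
    simp only [hrow, one_mul]
    by_cases hj : (j : ℕ) = n - 1
    · have hij : i = j := Fin.ext (by omega)
      rw [if_pos hij]
      have hB : ∀ x : Fin n, Bmat n x j = 1 / n := fun x => Bmat_last n x j hj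
      simp only [hB]
      rw [Finset.sum_const, Finset.card_univ, Fintype.card_fin, nsmul_eq_mul]
      field_simp
    · have hij : i ≠ j := fun h => hj (h ▸ hi)
      rw [if_neg hij]
      have hB : ∀ x : Fin n, Bmat n x j =
          (if (j:ℕ) < (x:ℕ) then (1:ℝ) else 0) - ((n : ℝ) - 1 - (j : ℕ)) / n :=
        fun x => Bmat_ne n x j hj
      simp only [hB, Finset.sum_sub_distrib, Finset.sum_const, Finset.card_univ,
        Fintype.card_fin, nsmul_eq_mul]
      rw [sum_ind n j j.isLt]
      field_simp
      ring
  · have hin : (i : ℕ) < n - 1 := by have := i.isLt; omega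
    have hi2 : (i : ℕ) + 1 < n := by omega
    set i' : Fin n := ⟨(i:ℕ) + 1, hi2⟩ with hi'
    have hvi' : (i' : ℕ) = (i:ℕ) + 1 := rfl
    have hii' : i ≠ i' := by
      intro h; have := congrArg Fin.val h; omega
    have hsum : ∀ k : Fin n, Amat n i k * Bmat n k j =
        (if k = i then -Bmat n i j else 0) + (if k = i' then Bmat n i' j else 0) := by
      intro k
      by_cases h1 : k = i
      · subst h1
        rw [if_pos rfl, if_neg hii', add_zero]
        have : Amat n k k = -1 := by simp [Amat, hi]
        rw [this]; ring
      · by_cases h2 : k = i'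
        · subst h2
          rw [if_neg (fun h => hii' h.symm), if_pos rfl, zero_add]
          have hA : Amat n i i' = 1 := by
            have h1 : ((i' : Fin n) : ℕ) ≠ (i : ℕ) := by omega
            simp [Amat, hi, h1]
            exact hvi'
          rw [hA, one_mul]
        · rw [if_neg h1, if_neg h2, add_zero]
          have hv1 : (k:ℕ) ≠ (i:ℕ) := fun h => h1 (Fin.ext h)
          have hv2 : (k:ℕ) ≠ (i:ℕ) + 1 := fun h => h2 (Fin.ext h)
          have hA : Amat n i k = 0 := by
            simp only [Amat, Matrix.of_apply, if_neg hi, if_neg hv1, if_neg hv2]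
          rw [hA, zero_mul]
    simp only [hsum, Finset.sum_add_distrib, Finset.sum_ite_eq', Finset.mem_univ, if_pos]
    by_cases hj : (j : ℕ) = n - 1
    · have hij : i ≠ j := fun h => hi (by rw [h]; exact hj)
      rw [if_neg hij, Bmat_last n i j hj, Bmat_last n i' j hj]
      ring
    · rw [Bmat_ne n i j hj, Bmat_ne n i' j hj, hvi']
      by_cases hij : i = j
      · have hji : (j:ℕ) = (i:ℕ) := by rw [hij]
        rw [if_pos hij, if_neg (show ¬ (j:ℕ) < (i:ℕ) by omega),
          if_pos (show (j:ℕ) < (i:ℕ) + 1 by omega)]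
        ring
      · rw [if_neg hij]
        have hji : (j:ℕ) ≠ (i:ℕ) := fun h => hij (Fin.ext h.symm)
        by_cases hlt : (j:ℕ) < (i:ℕ)
        · rw [if_pos hlt, if_pos (show (j:ℕ) < (i:ℕ) + 1 by omega)]; ring
        · rw [if_neg hlt, if_neg (show ¬ (j:ℕ) < (i:ℕ) + 1 by omega)]; ring

lemma Amat_isUnit (n : ℕ) (hn : 0 < n) : IsUnit (Amat n) := by
  have h := AB_eq_one n hn
  rw [Matrix.isUnit_iff_isUnit_det]
  have : (Amat n).det * (Bmat n).det = 1 := by rw [← Matrix.det_mul, h, Matrix.det_one]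
  exact isUnit_iff_exists_inv.mpr ⟨_, this⟩

lemma Amat_inv (n : ℕ) (hn : 0 < n) : (Amat n)⁻¹ = Bmat n :=
  Matrix.inv_eq_right_inv (AB_eq_one n hn)

theorem stmt8 (n : ℕ) (hn : 0 < n) :
    IsUnit (Amat n) ∧
    ∀ M : Matrix (Fin n) (Fin n) ℝ, M = ((Amat n)⁻¹)ᵀ * (Amat n)⁻¹ →
      (∀ k l : Fin n, (k : ℕ) ≤ (l : ℕ) → (l : ℕ) < n - 1 →
          M k l = (((k : ℕ) : ℝ) + 1) * ((n : ℝ) - (((l : ℕ) : ℝ) + 1)) / (n : ℝ)) ∧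
      Mᵀ = M ∧
      M ⟨n - 1, by omega⟩ ⟨n - 1, by omega⟩ = 1 / (n : ℝ) ∧
      (∀ k : Fin n, (k : ℕ) < n - 1 →
          M k ⟨n - 1, by omega⟩ = 0 ∧ M ⟨n - 1, by omega⟩ k = 0) := by
  have hn' : (n : ℝ) ≠ 0 := Nat.cast_ne_zero.mpr hn.ne'
  refine ⟨Amat_isUnit n hn, fun M hM => ?_⟩
  rw [Amat_inv n hn] at hM
  have hMsymm : Mᵀ = M := by
    rw [hM, Matrix.transpose_mul, Matrix.transpose_transpose]
  have hEntry : ∀ k l : Fin n, M k l = ∑ j : Fin n, Bmat n j k * Bmat n j l := by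
    intro k l
    rw [hM, Matrix.mul_apply]
    simp [Matrix.transpose_apply]
  have hlastcol : ∀ k : Fin n, (k : ℕ) < n - 1 → M k ⟨n - 1, by omega⟩ = 0 := by
    intro k hk
    rw [hEntry]
    have hB : ∀ j : Fin n, Bmat n j ⟨n-1, by omega⟩ = 1 / n :=
      fun j => Bmat_last n j _ rfl
    have hBk : ∀ j : Fin n, Bmat n j k =
        (if (k:ℕ) < (j:ℕ) then (1:ℝ) else 0) - ((n : ℝ) - 1 - (k : ℕ)) / n :=
      fun j => Bmat_ne n j k (by omega)
    simp only [hB, hBk, sub_mul, Finset.sum_sub_distrib, ← Finset.sum_mul,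
      Finset.sum_const, Finset.card_univ, Fintype.card_fin, nsmul_eq_mul]
    rw [sum_ind n k k.isLt]
    field_simp
    ring
  refine ⟨?_, hMsymm, ?_, fun k hk => ⟨hlastcol k hk, ?_⟩⟩
  · intro k l hkl hl
    rw [hEntry]
    have hk : (k : ℕ) < n - 1 := by omega
    have hBk : ∀ j : Fin n, Bmat n j k =
        (if (k:ℕ) < (j:ℕ) then (1:ℝ) else 0) - ((n : ℝ) - 1 - (k : ℕ)) / n :=
      fun j => Bmat_ne n j k (by omega)
    have hBl : ∀ j : Fin n, Bmat n j l =
        (if (l:ℕ) < (j:ℕ) then (1:ℝ) else 0) - ((n : ℝ) - 1 - (l : ℕ)) / n :=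
      fun j => Bmat_ne n j l (by omega)
    have expand : ∀ j : Fin n, Bmat n j k * Bmat n j l =
        (if (l:ℕ) < (j:ℕ) then (1:ℝ) else 0)
        - ((n : ℝ) - 1 - (l : ℕ)) / n * (if (k:ℕ) < (j:ℕ) then (1:ℝ) else 0)
        - ((n : ℝ) - 1 - (k : ℕ)) / n * (if (l:ℕ) < (j:ℕ) then (1:ℝ) else 0)
        + ((n : ℝ) - 1 - (k : ℕ)) / n * (((n : ℝ) - 1 - (l : ℕ)) / n) := by
      intro j
      rw [hBk j, hBl j]
      split_ifs with h1 h2 h2 <;> first | ring1 | (exfalso; omega)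
    simp only [expand, Finset.sum_add_distrib, Finset.sum_sub_distrib, ← Finset.mul_sum,
      Finset.sum_const, Finset.card_univ, Fintype.card_fin, nsmul_eq_mul]
    rw [sum_ind n k k.isLt, sum_ind n l l.isLt]
    field_simp
    ring
  · rw [hEntry]
    have hB : ∀ j : Fin n, Bmat n j ⟨n-1, by omega⟩ = 1 / n :=
      fun j => Bmat_last n j _ rfl
    simp only [hB]
    rw [Finset.sum_const, Finset.card_univ, Fintype.card_fin, nsmul_eq_mul]
    field_simp
  · rw [← hMsymm, Matrix.transpose_apply]
    exact hlastcol k hk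
end

section
/- Let x, f, z ∈ ℝ^n and t > 0. Then det[exp(x_i (z_j/√t + f_j))]_{i,j=1}^n = Σ_{k=0}^∞ t^{−k/2} T_k(z), where T_k(z) = Σ_{k_1+...+k_n = k, k_j ≥ 0} (z_1^{k_1}···z_n^{k_n})/(k_1!···k_n!) · det[e^{x_i f_j} x_i^{k_j}]_{i,j=1}^n, and the series converges absolutely. -/
open Finset

/-- `T_k(z) = Σ_{k_1+...+k_n = k} (Π_j z_j^{k_j}/k_j!) · det[e^{x_i f_j} x_i^{k_j}]`. -/
noncomputable def Tcoef (n : ℕ) (x f z : Fin n → ℝ) (k : ℕ) : ℝ :=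
  ∑ κ ∈ (Fintype.piFinset fun _ : Fin n => Finset.range (k + 1)).filter
      (fun κ => ∑ j, κ j = k),
    (∏ j, z j ^ κ j / (Nat.factorial (κ j) : ℝ)) *
      Matrix.det (Matrix.of fun i j : Fin n => Real.exp (x i * f j) * x i ^ κ j)

lemma filt_eq (n k : ℕ) :
    (Fintype.piFinset fun _ : Fin n => Finset.range (k + 1)).filter
      (fun κ => ∑ j, κ j = k) = Finset.piAntidiag Finset.univ k := by
  ext κ
  simp only [Finset.mem_filter, Fintype.mem_piFinset, Finset.mem_range, Nat.lt_succ_iff,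
    Finset.mem_piAntidiag, Finset.mem_univ, ne_eq, implies_true, and_true]
  constructor
  · rintro ⟨_, h⟩; exact h
  · intro h
    refine ⟨fun j => ?_, h⟩
    calc κ j ≤ ∑ i, κ i := Finset.single_le_sum (fun i _ => Nat.zero_le _) (Finset.mem_univ j)
    _ = k := h

lemma multinom_pow (n k : ℕ) (w : Fin n → ℝ) :
    (∑ j, w j) ^ k / (Nat.factorial k : ℝ) =
      ∑ κ ∈ Finset.piAntidiag Finset.univ k,
        ∏ j, w j ^ κ j / (Nat.factorial (κ j) : ℝ) := by
  rw [Finset.sum_pow_eq_sum_piAntidiag, Finset.sum_div]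
  refine Finset.sum_congr rfl fun κ hκ => ?_
  have hsum : ∑ j, κ j = k := by
    simpa using (Finset.mem_piAntidiag.1 hκ).1
  have hspec : ((∏ j, Nat.factorial (κ j) : ℕ) : ℝ) *
      (Nat.multinomial Finset.univ κ : ℝ) = (Nat.factorial k : ℝ) := by
    rw [← Nat.cast_mul, Nat.multinomial_spec, hsum]
  rw [Finset.prod_div_distrib]
  push_cast at hspec ⊢
  have h1 : (∏ j, (Nat.factorial (κ j) : ℝ)) ≠ 0 :=
    Finset.prod_ne_zero_iff.2 fun j _ => Nat.cast_ne_zero.2 (Nat.factorial_ne_zero _)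
  have h2 : (Nat.factorial k : ℝ) ≠ 0 := Nat.cast_ne_zero.2 (Nat.factorial_ne_zero _)
  field_simp
  rw [← hspec]; ring

lemma Tcoef_eq (n : ℕ) (x f z : Fin n → ℝ) (k : ℕ) :
    Tcoef n x f z k = ∑ σ : Equiv.Perm (Fin n),
      ((Equiv.Perm.sign σ : ℤ) : ℝ) * ((∏ j, Real.exp (x (σ j) * f j)) *
        ((∑ j, x (σ j) * z j) ^ k / (Nat.factorial k : ℝ))) := by
  unfold Tcoef
  rw [filt_eq]
  simp only [Matrix.det_apply', Matrix.of_apply]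
  simp_rw [Finset.mul_sum]
  rw [Finset.sum_comm]
  refine Finset.sum_congr rfl fun σ _ => ?_
  rw [multinom_pow, Finset.mul_sum, Finset.mul_sum]
  refine Finset.sum_congr rfl fun κ _ => ?_
  rw [mul_left_comm, ← Finset.prod_mul_distrib, ← Finset.prod_mul_distrib]
  congr 1
  refine Finset.prod_congr rfl fun j _ => ?_
  rw [mul_pow]
  ring

theorem stmt11 (n : ℕ) (x f z : Fin n → ℝ) (t : ℝ) (ht : 0 < t) :
    HasSum (fun k : ℕ => t ^ (-(k : ℝ) / 2) * Tcoef n x f z k)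
      (Matrix.det
        (Matrix.of fun i j : Fin n => Real.exp (x i * (z j / Real.sqrt t + f j)))) ∧
    Summable (fun k : ℕ => |t ^ (-(k : ℝ) / 2) * Tcoef n x f z k|) := by
  have hst : (0:ℝ) < Real.sqrt t := Real.sqrt_pos.2 ht
  set s : ℝ := (Real.sqrt t)⁻¹ with hs
  have hs2 : s = t ^ ((1:ℝ)/2 * -1) := by
    rw [hs, Real.rpow_mul ht.le, Real.rpow_neg_one, Real.sqrt_eq_rpow]
  have hrpow : ∀ k : ℕ, t ^ (-(k : ℝ) / 2) = s ^ k := by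
    intro k
    rw [hs2, ← Real.rpow_natCast (t ^ ((1:ℝ)/2 * -1)) k, ← Real.rpow_mul ht.le]
    norm_num
    ring_nf
  set a : Equiv.Perm (Fin n) → ℝ := fun σ =>
    ((Equiv.Perm.sign σ : ℤ) : ℝ) * (∏ j, Real.exp (x (σ j) * f j)) with ha
  set c : Equiv.Perm (Fin n) → ℝ := fun σ => ∑ j, x (σ j) * z j with hc
  have key : ∀ k : ℕ, t ^ (-(k : ℝ) / 2) * Tcoef n x f z k =
      ∑ σ : Equiv.Perm (Fin n), a σ * ((c σ * s) ^ k / (Nat.factorial k : ℝ)) := by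
    intro k
    rw [hrpow, Tcoef_eq, Finset.mul_sum]
    refine Finset.sum_congr rfl fun σ _ => ?_
    rw [mul_pow]
    simp only [ha, hc]
    ring
  have hexp : ∀ r : ℝ, HasSum (fun k : ℕ => r ^ k / (Nat.factorial k : ℝ)) (Real.exp r) := by
    intro r
    rw [Real.exp_eq_exp_ℝ]
    exact NormedSpace.expSeries_div_hasSum_exp r
  have hσ : ∀ σ : Equiv.Perm (Fin n),
      HasSum (fun k : ℕ => a σ * ((c σ * s) ^ k / (Nat.factorial k : ℝ)))
        (a σ * Real.exp (c σ * s)) := fun σ => (hexp (c σ * s)).mul_left _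
  have hdet : Matrix.det
      (Matrix.of fun i j : Fin n => Real.exp (x i * (z j / Real.sqrt t + f j))) =
      ∑ σ : Equiv.Perm (Fin n), a σ * Real.exp (c σ * s) := by
    rw [Matrix.det_apply']
    refine Finset.sum_congr rfl fun σ _ => ?_
    simp only [Matrix.of_apply, ha, hc]
    rw [mul_assoc]
    congr 1
    rw [Finset.sum_mul, Real.exp_sum, ← Finset.prod_mul_distrib]
    refine Finset.prod_congr rfl fun j _ => ?_
    rw [← Real.exp_add]
    congr 1
    rw [hs]
    field_simp
    ring
  constructor
  · rw [hdet]
    have := hasSum_sum (s := (Finset.univ : Finset (Equiv.Perm (Fin n))))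
      (f := fun σ k => a σ * ((c σ * s) ^ k / (Nat.factorial k : ℝ)))
      (a := fun σ => a σ * Real.exp (c σ * s)) (fun σ _ => hσ σ)
    convert this using 1
    funext k
    exact key k
  · have hg : Summable (fun k : ℕ =>
        ∑ σ : Equiv.Perm (Fin n), |a σ| * (|c σ * s| ^ k / (Nat.factorial k : ℝ))) := by
      refine summable_sum fun σ _ => ?_
      exact ((Real.summable_pow_div_factorial |c σ * s|)).mul_left _
    refine Summable.of_nonneg_of_le (fun k => abs_nonneg _) (fun k => ?_) hg
    rw [key]
    refine (Finset.abs_sum_le_sum_abs _ _).trans ?_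
    refine Finset.sum_le_sum fun σ _ => ?_
    rw [abs_mul, abs_div, abs_pow, Nat.abs_cast]
end
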